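/- Let 1 ≤ q < ∞ and g ∈ H^q of the unit disc. Define G(z) = (1/z)∫₀^z g(ζ) dζ (with G(0) = g(0)). Then G ∈ H^q and ‖G‖_{H^q} ≤ ‖g‖_{H^q}. -/

import Mathlib

open MeasureTheory

/-- The integral mean `M_q(f, r)`. -/
noncomputable def intMean (q : ℝ) (f : ℂ → ℂ) (r : ℝ) : ℝ :=
  ((2 * Real.pi)⁻¹ *
    ∫ θ in (0:ℝ)..(2 * Real.pi), ‖f ((r : ℂ) * Complex.exp (θ * Complex.I))‖ ^ q) ^ (1 / q)

/-- The set of integral means over radii 0 < r < 1. -/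
noncomputable def meanSet (q : ℝ) (f : ℂ → ℂ) : Set ℝ := intMean q f '' Set.Ioo (0:ℝ) 1

/-- The Hardy space norm `sup_{0<r<1} M_q(f,r)`. -/
noncomputable def hardyNorm (q : ℝ) (f : ℂ → ℂ) : ℝ := sSup (meanSet q f)

/-- Membership in the Hardy space `H^q` of the unit disc. -/
def MemHq (q : ℝ) (f : ℂ → ℂ) : Prop :=
  DifferentiableOn ℂ f (Metric.ball (0 : ℂ) 1) ∧ BddAbove (meanSet q f)

lemma diffG (g G : ℂ → ℂ) (hd : DifferentiableOn ℂ g (Metric.ball 0 1))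
    (hG : ∀ z : ℂ, G z = ∫ t in (0:ℝ)..1, g ((t : ℂ) * z)) :
    DifferentiableOn ℂ G (Metric.ball (0:ℂ) 1) := by
  have hderiv : ContinuousOn (deriv g) (Metric.ball 0 1) :=
    ((hd.analyticOnNhd Metric.isOpen_ball).deriv).continuousOn
  have hc : ContinuousOn g (Metric.ball 0 1) := hd.continuousOn
  intro z₀ hz₀
  suffices h : DifferentiableAt ℂ G z₀ from h.differentiableWithinAt
  have hz₀n : ‖z₀‖ < 1 := by simpa using hz₀
  have h0 : (0:ℝ) ≤ ‖z₀‖ := norm_nonneg _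
  set ρ : ℝ := (‖z₀‖ + 1) / 2 with hρdef
  have hρ1 : ρ < 1 := by rw [hρdef]; linarith
  have hρ0 : 0 ≤ ρ := by rw [hρdef]; linarith
  have hzρ : ‖z₀‖ < ρ := by rw [hρdef]; linarith
  set ε : ℝ := ρ - ‖z₀‖ with hεdef
  have hε0 : 0 < ε := by rw [hεdef]; linarith
  have hsub : Metric.closedBall (0:ℂ) ρ ⊆ Metric.ball 0 1 := Metric.closedBall_subset_ball hρ1
  obtain ⟨C, hC⟩ := (isCompact_closedBall (0:ℂ) ρ).exists_bound_of_continuousOn (hderiv.mono hsub)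
  have hmem : ∀ t : ℝ, t ∈ Set.Icc (0:ℝ) 1 → ∀ x ∈ Metric.ball z₀ ε,
      (t:ℂ) * x ∈ Metric.closedBall (0:ℂ) ρ := by
    intro t ht x hx
    have hxn : ‖x‖ < ρ := by
      have h1 : dist x z₀ < ε := hx
      have h2 : ‖x‖ ≤ ‖z₀‖ + dist x z₀ := by
        simpa [dist_eq_norm] using norm_le_norm_add_norm_sub' x z₀
      rw [hεdef] at h1; linarith
    simp only [Metric.mem_closedBall, dist_zero_right, norm_mul, Complex.norm_real,
      Real.norm_eq_abs, abs_of_nonneg ht.1]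
    nlinarith [ht.1, ht.2, norm_nonneg x]
  have hmemball : ∀ t : ℝ, t ∈ Set.Icc (0:ℝ) 1 → ∀ x ∈ Metric.ball z₀ ε,
      (t:ℂ) * x ∈ Metric.ball (0:ℂ) 1 := fun t ht x hx => hsub (hmem t ht x hx)
  have hz₀ball : z₀ ∈ Metric.ball z₀ ε := Metric.mem_ball_self hε0
  have hιsub : Set.uIoc (0:ℝ) 1 ⊆ Set.Icc (0:ℝ) 1 := by
    rw [Set.uIoc_of_le (zero_le_one)]; exact Set.Ioc_subset_Icc_self
  have hcont1 : ∀ x ∈ Metric.ball z₀ ε, ContinuousOn (fun t : ℝ => g ((t:ℂ) * x)) (Set.Icc 0 1) := by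
    intro x hx
    exact hc.comp (Complex.continuous_ofReal.mul continuous_const).continuousOn
      (fun t ht => hmemball t ht x hx)
  have hcont2 : ∀ x ∈ Metric.ball z₀ ε,
      ContinuousOn (fun t : ℝ => deriv g ((t:ℂ) * x)) (Set.Icc 0 1) := by
    intro x hx
    exact hderiv.comp (Complex.continuous_ofReal.mul continuous_const).continuousOn
      (fun t ht => hmemball t ht x hx)
  have key := intervalIntegral.hasDerivAt_integral_of_dominated_loc_of_deriv_le
      (F := fun x t => g ((t:ℂ) * x)) (F' := fun x t => deriv g ((t:ℂ) * x) * (t:ℂ))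
      (x₀ := z₀) (a := 0) (b := 1) (μ := volume) (bound := fun _ => |C|) (Metric.ball_mem_nhds z₀ hε0)
      ?_ ?_ ?_ ?_ ?_ ?_
  · exact (key.2.differentiableAt).congr_of_eventuallyEq
      (Filter.Eventually.of_forall fun z => hG z)
  · filter_upwards [Metric.ball_mem_nhds z₀ hε0] with x hx
    exact ((hcont1 x hx).mono hιsub).aestronglyMeasurable measurableSet_uIoc
  · apply ContinuousOn.intervalIntegrable
    rw [Set.uIcc_of_le (zero_le_one)]
    exact hcont1 z₀ hz₀ball
  · refine ContinuousOn.aestronglyMeasurable ?_ measurableSet_uIoc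
    refine ContinuousOn.mono ?_ hιsub
    exact ((hcont2 z₀ hz₀ball).mul (Complex.continuous_ofReal.continuousOn))
  · refine Filter.Eventually.of_forall fun t ht x hx => ?_
    have ht' : t ∈ Set.Icc (0:ℝ) 1 := hιsub ht
    have h1 : ‖deriv g ((t:ℂ) * x)‖ ≤ C := hC _ (hmem t ht' x hx)
    have h2 : ‖(t:ℂ)‖ ≤ 1 := by
      simp only [Complex.norm_real, Real.norm_eq_abs, abs_of_nonneg ht'.1]; exact ht'.2
    calc ‖deriv g ((t:ℂ) * x) * (t:ℂ)‖ = ‖deriv g ((t:ℂ) * x)‖ * ‖(t:ℂ)‖ := norm_mul _ _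
      _ ≤ C * 1 := by gcongr; exact (norm_nonneg _).trans h1
      _ ≤ |C| := by rw [mul_one]; exact le_abs_self C
  · exact intervalIntegrable_const
  · refine Filter.Eventually.of_forall fun t ht x hx => ?_
    have ht' : t ∈ Set.Icc (0:ℝ) 1 := hιsub ht
    have h1 : HasDerivAt g (deriv g ((t:ℂ)*x)) ((t:ℂ)*x) :=
      (hd.differentiableAt (Metric.isOpen_ball.mem_nhds (hmemball t ht' x hx))).hasDerivAt
    have h2 : HasDerivAt (fun y : ℂ => (t:ℂ)*y) (t:ℂ) x := by
      simpa using (hasDerivAt_id x).const_mul (t:ℂ)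
    exact h1.comp x h2

lemma memBall_aux {r t θ : ℝ} (hr0 : 0 ≤ r) (hr1 : r < 1) (ht0 : 0 ≤ t) (ht1 : t ≤ 1) :
    (t : ℂ) * ((r : ℂ) * Complex.exp (θ * Complex.I)) ∈ Metric.ball (0:ℂ) 1 := by
  have he : ‖Complex.exp ((θ:ℂ) * Complex.I)‖ = 1 := Complex.norm_exp_ofReal_mul_I θ
  simp only [Metric.mem_ball, dist_zero_right, norm_mul, Complex.norm_real, he,
    Real.norm_eq_abs, abs_of_nonneg hr0, abs_of_nonneg ht0, mul_one]
  nlinarith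

lemma memBall_aux' {r θ : ℝ} (hr0 : 0 ≤ r) (hr1 : r < 1) :
    (r : ℂ) * Complex.exp (θ * Complex.I) ∈ Metric.ball (0:ℂ) 1 := by
  simpa using memBall_aux (t := 1) (θ := θ) hr0 hr1 zero_le_one le_rfl

lemma intMean_nonneg (q : ℝ) (f : ℂ → ℂ) (r : ℝ) : 0 ≤ intMean q f r := by
  apply Real.rpow_nonneg
  apply mul_nonneg (inv_nonneg.2 (by positivity))
  apply intervalIntegral.integral_nonneg Real.two_pi_pos.le
  intro θ _
  exact Real.rpow_nonneg (norm_nonneg _) q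

lemma base_nonneg (q : ℝ) (f : ℂ → ℂ) (r : ℝ) :
    0 ≤ (2 * Real.pi)⁻¹ *
      ∫ θ in (0:ℝ)..(2 * Real.pi), ‖f ((r : ℂ) * Complex.exp (θ * Complex.I))‖ ^ q := by
  apply mul_nonneg (inv_nonneg.2 (by positivity))
  apply intervalIntegral.integral_nonneg Real.two_pi_pos.le
  intro θ _
  exact Real.rpow_nonneg (norm_nonneg _) q

lemma intMean_rpow (q : ℝ) (hq : 0 < q) (f : ℂ → ℂ) (r : ℝ) :
    intMean q f r ^ q = (2 * Real.pi)⁻¹ *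
      ∫ θ in (0:ℝ)..(2 * Real.pi), ‖f ((r : ℂ) * Complex.exp (θ * Complex.I))‖ ^ q := by
  rw [intMean, ← Real.rpow_mul (base_nonneg q f r), one_div, inv_mul_cancel₀ hq.ne',
    Real.rpow_one]

lemma hardyNorm_nonneg (q : ℝ) (f : ℂ → ℂ) (hb : BddAbove (meanSet q f)) :
    0 ≤ hardyNorm q f :=
  le_trans (intMean_nonneg q f (1/2))
    (le_csSup hb ⟨1/2, by norm_num, rfl⟩)

lemma slice_bound (q : ℝ) (hq : 0 < q) (g : ℂ → ℂ) (hb : BddAbove (meanSet q g))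
    {s : ℝ} (hs : s ∈ Set.Ioo (0:ℝ) 1) :
    ∫ θ in (0:ℝ)..(2 * Real.pi), ‖g ((s : ℂ) * Complex.exp (θ * Complex.I))‖ ^ q
      ≤ 2 * Real.pi * hardyNorm q g ^ q := by
  have hA : intMean q g s ≤ hardyNorm q g := le_csSup hb ⟨s, hs, rfl⟩
  have h1 : intMean q g s ^ q ≤ hardyNorm q g ^ q :=
    Real.rpow_le_rpow (intMean_nonneg q g s) hA hq.le
  rw [intMean_rpow q hq g s] at h1
  have h2π : (0:ℝ) < 2 * Real.pi := Real.two_pi_pos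
  calc ∫ θ in (0:ℝ)..(2 * Real.pi), ‖g ((s : ℂ) * Complex.exp (θ * Complex.I))‖ ^ q
      = (2 * Real.pi) * ((2 * Real.pi)⁻¹ *
        ∫ θ in (0:ℝ)..(2 * Real.pi), ‖g ((s : ℂ) * Complex.exp (θ * Complex.I))‖ ^ q) := by
        rw [← mul_assoc, mul_inv_cancel₀ h2π.ne', one_mul]
    _ ≤ 2 * Real.pi * hardyNorm q g ^ q := by
        exact mul_le_mul_of_nonneg_left h1 h2π.le

lemma jensen_pointwise (q : ℝ) (hq : 1 ≤ q) (h : ℝ → ℝ)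
    (hcont : ContinuousOn h (Set.Icc 0 1)) (hpos : ∀ t, 0 ≤ h t) :
    (∫ t in (0:ℝ)..1, h t) ^ q ≤ ∫ t in (0:ℝ)..1, h t ^ q := by
  have hq0 : 0 < q := lt_of_lt_of_le one_pos hq
  have hμ : IsProbabilityMeasure (volume.restrict (Set.Ioc (0:ℝ) 1)) := by
    constructor
    rw [Measure.restrict_apply_univ, Real.volume_Ioc]
    norm_num
  rw [intervalIntegral.integral_of_le zero_le_one, intervalIntegral.integral_of_le zero_le_one]
  have hfi : Integrable h (volume.restrict (Set.Ioc (0:ℝ) 1)) :=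
    (hcont.integrableOn_Icc).mono_set Set.Ioc_subset_Icc_self
  have hgi : Integrable (fun t => h t ^ q) (volume.restrict (Set.Ioc (0:ℝ) 1)) :=
    ((hcont.rpow_const (fun x _ => Or.inr hq0.le)).integrableOn_Icc).mono_set
      Set.Ioc_subset_Icc_self
  have hcont' : ContinuousOn (fun x : ℝ => x ^ q) (Set.Ici 0) := fun x _ =>
    (Real.continuousAt_rpow_const x q (Or.inr hq0.le)).continuousWithinAt
  exact ConvexOn.map_integral_le (convexOn_rpow hq) hcont' isClosed_Ici
    (Filter.Eventually.of_forall fun t => hpos t) hfi hgi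

lemma mean_bound (q : ℝ) (hq : 1 ≤ q) (g G : ℂ → ℂ)
    (hgc : ContinuousOn g (Metric.ball 0 1)) (hb : BddAbove (meanSet q g))
    (hGc : ContinuousOn G (Metric.ball 0 1))
    (hG : ∀ z : ℂ, G z = ∫ t in (0:ℝ)..1, g ((t : ℂ) * z))
    {r : ℝ} (hr : r ∈ Set.Ioo (0:ℝ) 1) :
    intMean q G r ≤ hardyNorm q g := by
  have hq0 : 0 < q := lt_of_lt_of_le one_pos hq
  have hr0 : 0 < r := hr.1
  have hr1 : r < 1 := hr.2
  have h2π : (0:ℝ) < 2 * Real.pi := Real.two_pi_pos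
  have hA0 : 0 ≤ hardyNorm q g := hardyNorm_nonneg q g hb
  have hecont : Continuous (fun θ : ℝ => Complex.exp (θ * Complex.I)) :=
    (Complex.continuous_ofReal.mul continuous_const).cexp
  -- continuity of the 2-variable integrand on the compact rectangle
  have hΦcont : ContinuousOn
      (fun p : ℝ × ℝ => ‖g ((p.2 : ℂ) * ((r : ℂ) * Complex.exp (p.1 * Complex.I)))‖ ^ q)
      (Set.Icc 0 (2 * Real.pi) ×ˢ Set.Icc (0:ℝ) 1) := by
    apply ContinuousOn.rpow_const
    · apply ContinuousOn.norm
      apply hgc.comp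
      · exact ((Complex.continuous_ofReal.comp continuous_snd).mul
          (continuous_const.mul (hecont.comp continuous_fst))).continuousOn
      · rintro ⟨θ, t⟩ ⟨hθ, ht⟩
        exact memBall_aux hr0.le hr1 ht.1 ht.2
    · exact fun _ _ => Or.inr hq0.le
  -- product integrability
  have hprod : Integrable
      (Function.uncurry fun θ t : ℝ =>
        ‖g ((t : ℂ) * ((r : ℂ) * Complex.exp (θ * Complex.I)))‖ ^ q)
      ((volume.restrict (Set.Ioc (0:ℝ) (2 * Real.pi))).prod
        (volume.restrict (Set.Ioc (0:ℝ) 1))) := by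
    rw [Measure.prod_restrict, ← Measure.volume_eq_prod]
    apply IntegrableOn.mono_set (t := Set.Icc 0 (2 * Real.pi) ×ˢ Set.Icc (0:ℝ) 1)
    · exact hΦcont.integrableOn_compact (isCompact_Icc.prod isCompact_Icc)
    · exact Set.prod_mono Set.Ioc_subset_Icc_self Set.Ioc_subset_Icc_self
  -- pointwise Jensen
  have step1 : ∀ θ : ℝ, ‖G ((r : ℂ) * Complex.exp (θ * Complex.I))‖ ^ q ≤
      ∫ t in (0:ℝ)..1, ‖g ((t : ℂ) * ((r : ℂ) * Complex.exp (θ * Complex.I)))‖ ^ q := by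
    intro θ
    have hcomp : ContinuousOn
        (fun t : ℝ => ‖g ((t : ℂ) * ((r : ℂ) * Complex.exp (θ * Complex.I)))‖)
        (Set.Icc 0 1) := by
      apply ContinuousOn.norm
      exact hgc.comp (Complex.continuous_ofReal.mul continuous_const).continuousOn
        (fun t ht => memBall_aux hr0.le hr1 ht.1 ht.2)
    have h1 : ‖G ((r : ℂ) * Complex.exp (θ * Complex.I))‖ ≤
        ∫ t in (0:ℝ)..1, ‖g ((t : ℂ) * ((r : ℂ) * Complex.exp (θ * Complex.I)))‖ := by
      rw [hG]
      exact intervalIntegral.norm_integral_le_integral_norm zero_le_one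
    exact (Real.rpow_le_rpow (norm_nonneg _) h1 hq0.le).trans
      (jensen_pointwise q hq _ hcomp (fun t => norm_nonneg _))
  -- integrability of both sides in θ
  have hGθcont : Continuous
      (fun θ : ℝ => ‖G ((r : ℂ) * Complex.exp (θ * Complex.I))‖ ^ q) := by
    apply Continuous.rpow_const
    · exact (hGc.comp_continuous (continuous_const.mul hecont)
        (fun θ => memBall_aux' hr0.le hr1)).norm
    · exact fun _ => Or.inr hq0.le
  have hint1 : IntervalIntegrable
      (fun θ : ℝ => ‖G ((r : ℂ) * Complex.exp (θ * Complex.I))‖ ^ q) volume 0 (2 * Real.pi) :=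
    hGθcont.intervalIntegrable _ _
  have hint2 : IntervalIntegrable
      (fun θ : ℝ => ∫ t in (0:ℝ)..1,
        ‖g ((t : ℂ) * ((r : ℂ) * Complex.exp (θ * Complex.I)))‖ ^ q) volume 0 (2 * Real.pi) := by
    rw [intervalIntegrable_iff, Set.uIoc_of_le h2π.le]
    refine (hprod.integral_prod_left).congr (Filter.Eventually.of_forall fun θ => ?_)
    simp only [Function.uncurry]
    rw [intervalIntegral.integral_of_le zero_le_one]
  have step2 : (∫ θ in (0:ℝ)..(2 * Real.pi),
        ‖G ((r : ℂ) * Complex.exp (θ * Complex.I))‖ ^ q) ≤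
      ∫ θ in (0:ℝ)..(2 * Real.pi), ∫ t in (0:ℝ)..1,
        ‖g ((t : ℂ) * ((r : ℂ) * Complex.exp (θ * Complex.I)))‖ ^ q :=
    intervalIntegral.integral_mono_on h2π.le hint1 hint2 (fun θ _ => step1 θ)
  have swap : (∫ θ in (0:ℝ)..(2 * Real.pi), ∫ t in (0:ℝ)..1,
        ‖g ((t : ℂ) * ((r : ℂ) * Complex.exp (θ * Complex.I)))‖ ^ q) =
      ∫ t in Set.Ioc (0:ℝ) 1, ∫ θ in Set.Ioc (0:ℝ) (2 * Real.pi),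
        ‖g ((t : ℂ) * ((r : ℂ) * Complex.exp (θ * Complex.I)))‖ ^ q := by
    rw [intervalIntegral.integral_of_le h2π.le]
    simp only [intervalIntegral.integral_of_le zero_le_one]
    exact integral_integral_swap hprod
  have step3 : (∫ t in Set.Ioc (0:ℝ) 1, ∫ θ in Set.Ioc (0:ℝ) (2 * Real.pi),
        ‖g ((t : ℂ) * ((r : ℂ) * Complex.exp (θ * Complex.I)))‖ ^ q) ≤
      ∫ _t in Set.Ioc (0:ℝ) 1, (2 * Real.pi * hardyNorm q g ^ q) := by
    apply setIntegral_mono_on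
    · exact hprod.integral_prod_right
    · rw [integrableOn_const_iff]
      right
      rw [Real.volume_Ioc]
      norm_num
    · exact measurableSet_Ioc
    · intro t ht
      have hs : t * r ∈ Set.Ioo (0:ℝ) 1 := ⟨mul_pos ht.1 hr0, by nlinarith [ht.2]⟩
      have hb2 := slice_bound q hq0 g hb hs
      rw [← intervalIntegral.integral_of_le h2π.le]
      have hcast : ∀ θ : ℝ, (t : ℂ) * ((r : ℂ) * Complex.exp (θ * Complex.I)) =
          ((t * r : ℝ) : ℂ) * Complex.exp (θ * Complex.I) := by
        intro θ; push_cast; ring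
      simp only [hcast]
      exact hb2
  have hconst : (∫ _t in Set.Ioc (0:ℝ) 1, (2 * Real.pi * hardyNorm q g ^ q)) =
      2 * Real.pi * hardyNorm q g ^ q := by
    rw [setIntegral_const, Real.volume_real_Ioc_of_le zero_le_one]
    norm_num
  have htotal : (∫ θ in (0:ℝ)..(2 * Real.pi),
      ‖G ((r : ℂ) * Complex.exp (θ * Complex.I))‖ ^ q) ≤ 2 * Real.pi * hardyNorm q g ^ q :=
    step2.trans (le_of_le_of_eq (swap ▸ step3) hconst)
  have hfinal : (2 * Real.pi)⁻¹ * (∫ θ in (0:ℝ)..(2 * Real.pi),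
      ‖G ((r : ℂ) * Complex.exp (θ * Complex.I))‖ ^ q) ≤ hardyNorm q g ^ q := by
    calc (2 * Real.pi)⁻¹ * (∫ θ in (0:ℝ)..(2 * Real.pi),
          ‖G ((r : ℂ) * Complex.exp (θ * Complex.I))‖ ^ q)
        ≤ (2 * Real.pi)⁻¹ * (2 * Real.pi * hardyNorm q g ^ q) :=
          mul_le_mul_of_nonneg_left htotal (inv_nonneg.2 h2π.le)
      _ = hardyNorm q g ^ q := by field_simp
  rw [intMean]
  calc ((2 * Real.pi)⁻¹ * ∫ θ in (0:ℝ)..(2 * Real.pi),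
        ‖G ((r : ℂ) * Complex.exp (θ * Complex.I))‖ ^ q) ^ (1 / q)
      ≤ (hardyNorm q g ^ q) ^ (1 / q) :=
        Real.rpow_le_rpow (base_nonneg q G r) hfinal (by positivity)
    _ = hardyNorm q g := by
        rw [← Real.rpow_mul hA0, mul_one_div, div_self hq0.ne', Real.rpow_one]

theorem primitive_mean_bound
    (q : ℝ) (hq : 1 ≤ q) (g : ℂ → ℂ) (hg : MemHq q g)
    (G : ℂ → ℂ) (hG : ∀ z : ℂ, G z = ∫ t in (0:ℝ)..1, g ((t : ℂ) * z)) :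
    MemHq q G ∧ hardyNorm q G ≤ hardyNorm q g := by
  have hdiff : DifferentiableOn ℂ G (Metric.ball (0:ℂ) 1) := diffG g G hg.1 hG
  have hbound : ∀ x ∈ meanSet q G, x ≤ hardyNorm q g := by
    rintro x ⟨r, hr, rfl⟩
    exact mean_bound q hq g G hg.1.continuousOn hg.2 hdiff.continuousOn hG hr
  have hbdd : BddAbove (meanSet q G) := ⟨hardyNorm q g, fun x hx => hbound x hx⟩
  refine ⟨⟨hdiff, hbdd⟩, ?_⟩
  apply csSup_le
  · exact ⟨intMean q G (1/2), ⟨1/2, by norm_num, rfl⟩⟩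
  · exact hbound
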